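/- The influence function of Gini's mean difference g(F) = E_F|X−Y| at the standard normal distribution is IF(x) = 4φ(x) + 2x(2Φ(x) − 1) − 4/√π, i.e., the limit as ε ↓ 0 of (g((1−ε)N(0,1) + ε·δ_x) − g(N(0,1)))/ε equals this expression for every real x. -/

import Mathlib

open Real MeasureTheory ProbabilityTheory
open Filter Set

noncomputable def phi (x : ℝ) : ℝ := (1 / Real.sqrt (2 * Real.pi)) * Real.exp (-x ^ 2 / 2)

noncomputable def Phi (x : ℝ) : ℝ := ∫ t in Set.Iic x, phi t

/-- Gini's mean difference of a distribution `μ`: `E|X - Y|` for `X, Y` i.i.d. `~ μ`. -/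
noncomputable def gini (μ : Measure ℝ) : ℝ :=
  ∫ p : ℝ × ℝ, |p.1 - p.2| ∂(μ.prod μ)

/-- The contaminated distribution `(1-ε)·N(0,1) + ε·δ_x`. -/
noncomputable def contam (ε x : ℝ) : Measure ℝ :=
  ENNReal.ofReal (1 - ε) • gaussianReal 0 1 + ENNReal.ofReal ε • Measure.dirac x

lemma phi_eq_pdf (u : ℝ) : gaussianPDFReal 0 1 u = phi u := by
  simp [gaussianPDFReal, phi, one_div]

lemma phi_nonneg (u : ℝ) : 0 ≤ phi u := by unfold phi; positivity

lemma phi_pos (u : ℝ) : 0 < phi u := by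
  unfold phi
  have := Real.pi_pos
  positivity

lemma continuous_phi : Continuous phi := by
  unfold phi; fun_prop

lemma integrable_phi : Integrable phi := by
  simpa [funext phi_eq_pdf] using integrable_gaussianPDFReal 0 1

lemma integral_phi : ∫ u, phi u = 1 := by
  simpa [funext phi_eq_pdf] using integral_gaussianPDFReal_eq_one 0 (v := 1) one_ne_zero

lemma integrable_mul_phi : Integrable (fun u => u * phi u) := by
  have h := (integrable_mul_exp_neg_mul_sq (by norm_num : (0:ℝ) < 2⁻¹)).const_mul
    (1 / Real.sqrt (2 * Real.pi))
  refine h.congr ?_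
  filter_upwards with u
  unfold phi
  rw [show -(2:ℝ)⁻¹ * u ^ 2 = -u ^ 2 / 2 by ring]
  ring

lemma integrable_abs_mul_phi : Integrable (fun u => |u| * phi u) := by
  have := integrable_mul_phi.abs
  refine this.congr ?_
  filter_upwards with u
  rw [abs_mul, abs_of_nonneg (phi_nonneg u)]

lemma hasDerivAt_neg_phi (u : ℝ) : HasDerivAt (fun t => -phi t) (u * phi u) u := by
  have h : HasDerivAt (fun t : ℝ => -t ^ 2 / 2) (-u) u := by
    have := ((hasDerivAt_pow 2 u).neg).div_const 2
    simpa using this.congr_deriv (by ring)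
  have h2 := (h.exp).const_mul (1 / Real.sqrt (2 * Real.pi))
  have := h2.neg
  refine this.congr_deriv ?_
  unfold phi
  ring

lemma tendsto_sq_atTop : Tendsto (fun u : ℝ => u ^ 2) atTop atTop :=
  tendsto_pow_atTop two_ne_zero

lemma tendsto_sq_atBot : Tendsto (fun u : ℝ => u ^ 2) atBot atTop := by
  have := (tendsto_pow_atTop (α := ℝ) two_ne_zero).comp tendsto_neg_atBot_atTop
  refine this.congr ?_
  intro u; simp [Function.comp, neg_pow]

lemma tendsto_phi_of_sq (l : Filter ℝ) (h : Tendsto (fun u : ℝ => u ^ 2) l atTop) :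
    Tendsto phi l (nhds 0) := by
  have h1 : Tendsto (fun u : ℝ => -u ^ 2 / 2) l atBot := by
    apply Tendsto.atBot_div_const (by norm_num)
    exact tendsto_neg_atTop_atBot.comp h
  have h2 : Tendsto (fun u : ℝ => (1 / Real.sqrt (2 * Real.pi)) * Real.exp (-u ^ 2 / 2)) l
      (nhds ((1 / Real.sqrt (2 * Real.pi)) * 0)) := (Real.tendsto_exp_atBot.comp h1).const_mul _
  rw [mul_zero] at h2
  exact h2

lemma tendsto_phi_atTop : Tendsto phi atTop (nhds 0) := tendsto_phi_of_sq _ tendsto_sq_atTop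

lemma tendsto_phi_atBot : Tendsto phi atBot (nhds 0) := tendsto_phi_of_sq _ tendsto_sq_atBot

lemma Phi_nonneg (x : ℝ) : 0 ≤ Phi x :=
  setIntegral_nonneg measurableSet_Iic fun u _ => phi_nonneg u

lemma Phi_le_one (x : ℝ) : Phi x ≤ 1 := by
  rw [← integral_phi]
  exact setIntegral_le_integral integrable_phi (ae_of_all _ phi_nonneg)

lemma integral_Iic_add_Ioi (x : ℝ) {f : ℝ → ℝ} (hf : Integrable f) :
    (∫ u in Iic x, f u) + ∫ u in Ioi x, f u = ∫ u, f u := by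
  have := (setIntegral_union (μ := volume) (f := f) (s := Iic x) (t := Ioi x)
    (Iic_disjoint_Ioi le_rfl) measurableSet_Ioi hf.integrableOn hf.integrableOn).symm
  rwa [Iic_union_Ioi, setIntegral_univ] at this

lemma integral_Ioi_phi (x : ℝ) : ∫ u in Ioi x, phi u = 1 - Phi x := by
  have h := integral_Iic_add_Ioi x integrable_phi
  rw [integral_phi] at h
  have h2 : Phi x = ∫ u in Iic x, phi u := rfl
  linarith

lemma integral_Ioi_mul_phi (x : ℝ) : ∫ u in Ioi x, u * phi u = phi x := by
  have := integral_Ioi_of_hasDerivAt_of_tendsto' (f := fun t => -phi t) (a := x)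
    (f' := fun u => u * phi u)
    (fun t _ => hasDerivAt_neg_phi t) integrable_mul_phi.integrableOn
    ((tendsto_phi_atTop.neg).congr (fun t => rfl) |>.mono_left le_rfl)
  simpa using this

lemma integral_Iic_mul_phi (x : ℝ) : ∫ u in Iic x, u * phi u = -phi x := by
  have := integral_Iic_of_hasDerivAt_of_tendsto' (f := fun t => -phi t) (a := x)
    (f' := fun u => u * phi u)
    (fun t _ => hasDerivAt_neg_phi t) integrable_mul_phi.integrableOn
    ((tendsto_phi_atBot.neg).congr (fun t => rfl) |>.mono_left le_rfl)
  simpa using this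

lemma hasDerivAt_Phi (x : ℝ) : HasDerivAt Phi (phi x) x := by
  have key : ∀ y : ℝ, Phi y = Phi 0 + ∫ t in (0:ℝ)..y, phi t := by
    intro y
    rw [← intervalIntegral.integral_Iic_sub_Iic (a := (0:ℝ)) (b := y) (f := phi) (μ := volume)
      integrable_phi.integrableOn integrable_phi.integrableOn]
    show Phi y = Phi 0 + (Phi y - Phi 0)
    ring
  have h : HasDerivAt (fun y => ∫ t in (0:ℝ)..y, phi t) (phi x) x := by
    refine intervalIntegral.integral_hasDerivAt_right
      (continuous_phi.intervalIntegrable 0 x)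
      (continuous_phi.stronglyMeasurableAtFilter _ _)
      continuous_phi.continuousAt
  have := (h.const_add (Phi 0))
  refine this.congr_of_eventuallyEq ?_
  filter_upwards with y using key y

lemma gauss_Iic (x : ℝ) : gaussianReal 0 1 (Iic x) = ENNReal.ofReal (Phi x) := by
  rw [gaussianReal_apply_eq_integral 0 one_ne_zero]
  congr 1
  exact setIntegral_congr_fun measurableSet_Iic fun u _ => phi_eq_pdf u

lemma Phi_eq_toReal (x : ℝ) : Phi x = (gaussianReal 0 1 (Iic x)).toReal := by
  rw [gauss_Iic, ENNReal.toReal_ofReal (Phi_nonneg x)]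

lemma tendsto_Phi_atTop : Tendsto Phi atTop (nhds 1) := by
  have h1 : Tendsto (fun x => gaussianReal 0 1 (Iic x)) atTop (nhds 1) := by
    have := tendsto_measure_Iic_atTop (gaussianReal 0 1)
    simpa using this
  have h2 := (ENNReal.tendsto_toReal ENNReal.one_ne_top).comp h1
  simp only [ENNReal.toReal_one] at h2
  exact h2.congr fun x => (Phi_eq_toReal x).symm

lemma tendsto_Phi_atBot : Tendsto Phi atBot (nhds 0) := by
  have hempty : (⋂ x : ℝ, Iic x) = (∅ : Set ℝ) := by
    ext y
    simp only [mem_iInter, mem_Iic, mem_empty_iff_false, iff_false, not_forall]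
    exact ⟨y - 1, by linarith⟩
  have h1 : Tendsto (fun x => gaussianReal 0 1 (Iic x)) atBot (nhds 0) := by
    have := tendsto_measure_iInter_atBot (μ := gaussianReal 0 1) (s := fun x : ℝ => Iic x)
      (fun x => measurableSet_Iic.nullMeasurableSet) (fun a b hab => Iic_subset_Iic.2 hab)
      ⟨0, by simp [measure_ne_top]⟩
    rwa [hempty, measure_empty] at this
  have h2 := (ENNReal.tendsto_toReal ENNReal.zero_ne_top).comp h1
  simp only [ENNReal.toReal_zero] at h2
  exact h2.congr fun x => (Phi_eq_toReal x).symm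

lemma gauss_eq_withDensity :
    gaussianReal 0 1 = volume.withDensity (fun u => ((phi u).toNNReal : ENNReal)) := by
  rw [gaussianReal_of_var_ne_zero 0 one_ne_zero]
  congr 1
  ext u
  show ENNReal.ofReal (gaussianPDFReal 0 1 u) = ((phi u).toNNReal : ENNReal)
  rw [phi_eq_pdf]
  rfl

lemma toNNReal_smul_phi (g : ℝ → ℝ) (u : ℝ) : (phi u).toNNReal • g u = phi u * g u := by
  rw [NNReal.smul_def, Real.coe_toNNReal _ (phi_nonneg u), smul_eq_mul]

lemma integral_gauss (g : ℝ → ℝ) :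
    ∫ u, g u ∂(gaussianReal 0 1) = ∫ u, phi u * g u := by
  rw [gauss_eq_withDensity,
    integral_withDensity_eq_integral_smul (continuous_phi.measurable.real_toNNReal) g]
  congr 1
  ext u
  exact toNNReal_smul_phi g u

lemma integrable_gauss_iff (g : ℝ → ℝ) :
    Integrable g (gaussianReal 0 1) ↔ Integrable (fun u => phi u * g u) volume := by
  rw [gauss_eq_withDensity,
    integrable_withDensity_iff_integrable_smul (continuous_phi.measurable.real_toNNReal)]
  constructor <;> intro h <;> refine h.congr (ae_of_all _ fun u => ?_)
  · exact toNNReal_smul_phi g u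
  · exact (toNNReal_smul_phi g u).symm

lemma integrable_phi_mul_abs (x : ℝ) : Integrable (fun u => phi u * |u - x|) := by
  refine Integrable.mono' (g := fun u => |u| * phi u + |x| * phi u)
    (integrable_abs_mul_phi.add (integrable_phi.const_mul _))
    (continuous_phi.mul ((continuous_id.sub continuous_const).abs)).aestronglyMeasurable
    (ae_of_all _ fun u => ?_)
  rw [Real.norm_eq_abs, abs_of_nonneg (mul_nonneg (phi_nonneg u) (abs_nonneg _))]
  show phi u * |u - x| ≤ |u| * phi u + |x| * phi u
  have h1 : |u - x| ≤ |u| + |x| := abs_sub u x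
  nlinarith [phi_nonneg u, abs_nonneg u, abs_nonneg x]
lemma integral_phi_mul_abs (x : ℝ) :
    ∫ u, phi u * |u - x| = 2 * phi x + x * (2 * Phi x - 1) := by
  have hIic : ∫ u in Iic x, phi u * |u - x| = x * Phi x + phi x := by
    rw [setIntegral_congr_fun measurableSet_Iic
      (g := fun u => x * phi u - u * phi u) (fun u hu => by
        rw [abs_of_nonpos (by simpa using hu)]; ring)]
    rw [integral_sub ((integrable_phi.const_mul x).integrableOn) integrable_mul_phi.integrableOn,
      integral_const_mul, integral_Iic_mul_phi]
    show x * Phi x - -phi x = _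
    ring
  have hIoi : ∫ u in Ioi x, phi u * |u - x| = phi x - x * (1 - Phi x) := by
    rw [setIntegral_congr_fun measurableSet_Ioi
      (g := fun u => u * phi u - x * phi u) (fun u hu => by
        rw [abs_of_nonneg (by simp only [mem_Ioi] at hu; linarith)]; ring)]
    rw [integral_sub integrable_mul_phi.integrableOn ((integrable_phi.const_mul x).integrableOn),
      integral_const_mul, integral_Ioi_mul_phi, integral_Ioi_phi]
  rw [← integral_Iic_add_Ioi x (integrable_phi_mul_abs x), hIic, hIoi]
  ring

lemma integral_abs_gauss (x : ℝ) :
    ∫ u, |u - x| ∂(gaussianReal 0 1) = 2 * phi x + x * (2 * Phi x - 1) := by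
  rw [integral_gauss, integral_phi_mul_abs]

lemma integrable_abs_gauss (x : ℝ) :
    Integrable (fun u => |u - x|) (gaussianReal 0 1) := by
  rw [integrable_gauss_iff]
  exact integrable_phi_mul_abs x

lemma sqrt_two_pi_mul : Real.sqrt (2 * π) * Real.sqrt (2 * π) = 2 * π :=
  Real.mul_self_sqrt (by positivity)

lemma phi_sq (v : ℝ) : phi v * phi v = (1 / (2 * π)) * rexp (-v ^ 2) := by
  unfold phi
  rw [show (1 / Real.sqrt (2 * π)) * rexp (-v ^ 2 / 2) *
      ((1 / Real.sqrt (2 * π)) * rexp (-v ^ 2 / 2)) =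
      (1 / (Real.sqrt (2 * π) * Real.sqrt (2 * π))) * (rexp (-v ^ 2 / 2) * rexp (-v ^ 2 / 2))
    by ring, sqrt_two_pi_mul, ← Real.exp_add]
  norm_num

lemma phi_sqrt_two (v : ℝ) : phi (Real.sqrt 2 * v) = (1 / Real.sqrt (2 * π)) * rexp (-v ^ 2) := by
  unfold phi
  congr 1
  rw [mul_pow, Real.sq_sqrt (by norm_num : (0:ℝ) ≤ 2)]
  ring

lemma integral_phi_sq : ∫ u, phi u * phi u = 1 / (2 * Real.sqrt π) := by
  simp_rw [phi_sq]
  rw [integral_const_mul]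
  have h : ∫ u : ℝ, rexp (-u ^ 2) = Real.sqrt π := by
    have := integral_gaussian 1
    simpa using this
  rw [h]
  have hπ : Real.sqrt π * Real.sqrt π = π := Real.mul_self_sqrt pi_pos.le
  have hs : Real.sqrt π > 0 := Real.sqrt_pos.mpr pi_pos
  field_simp
  nlinarith

lemma abs_two_Phi_sub_one_le (v : ℝ) : |2 * Phi v - 1| ≤ 1 := by
  rw [abs_le]
  constructor <;> [linarith [Phi_nonneg v]; linarith [Phi_le_one v]]

lemma integrable_K : Integrable (fun v => phi v * (v * (2 * Phi v - 1))) := by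
  refine Integrable.mono' (g := fun u => |u| * phi u) integrable_abs_mul_phi
    ?_ (ae_of_all _ fun v => ?_)
  · have hc : Continuous Phi := continuous_iff_continuousAt.2 fun x => (hasDerivAt_Phi x).continuousAt
    exact (continuous_phi.mul (continuous_id.mul
      ((continuous_const.mul hc).sub continuous_const))).aestronglyMeasurable
  · rw [Real.norm_eq_abs, abs_mul, abs_mul, abs_of_nonneg (phi_nonneg v)]
    have h1 := abs_two_Phi_sub_one_le v
    show phi v * (|v| * |2 * Phi v - 1|) ≤ |v| * phi v
    have h3 := mul_le_mul_of_nonneg_left h1 (mul_nonneg (phi_nonneg v) (abs_nonneg v))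
    nlinarith [h3]

noncomputable def Hfun (v : ℝ) : ℝ :=
  -((2 * Phi v - 1) * phi v) + (1 / Real.sqrt π) * Phi (Real.sqrt 2 * v)

lemma hasDerivAt_phi (v : ℝ) : HasDerivAt phi (-(v * phi v)) v := by
  have := (hasDerivAt_neg_phi v).neg
  exact this.congr_of_eventuallyEq (by filter_upwards with t; simp)

lemma claim_zero (v : ℝ) :
    -(2 * (phi v * phi v)) + (1 / Real.sqrt π) * (phi (Real.sqrt 2 * v) * Real.sqrt 2) = 0 := by
  rw [phi_sq, phi_sqrt_two, Real.sqrt_mul (by norm_num : (0:ℝ) ≤ 2) π]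
  have h2 : Real.sqrt 2 * Real.sqrt 2 = 2 := Real.mul_self_sqrt (by norm_num)
  have hp : Real.sqrt π * Real.sqrt π = π := Real.mul_self_sqrt pi_pos.le
  have h2p : (0:ℝ) < Real.sqrt 2 := Real.sqrt_pos.mpr (by norm_num)
  have hpp : (0:ℝ) < Real.sqrt π := Real.sqrt_pos.mpr pi_pos
  field_simp
  linear_combination (-rexp (-v ^ 2)) * hp

lemma hasDerivAt_Hfun (v : ℝ) :
    HasDerivAt Hfun (phi v * (v * (2 * Phi v - 1))) v := by
  have h1 : HasDerivAt (fun v => 2 * Phi v - 1) (2 * phi v) v :=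
    ((hasDerivAt_Phi v).const_mul 2).sub_const 1
  have hprod := (h1.mul (hasDerivAt_phi v)).neg
  have hinner : HasDerivAt (fun v : ℝ => Real.sqrt 2 * v) (Real.sqrt 2 * 1) v :=
    (hasDerivAt_id v).const_mul (Real.sqrt 2)
  have hcomp : HasDerivAt (fun v => Phi (Real.sqrt 2 * v))
      (phi (Real.sqrt 2 * v) * (Real.sqrt 2 * 1)) v :=
    (hasDerivAt_Phi (Real.sqrt 2 * v)).comp v hinner
  have htot := hprod.add (hcomp.const_mul (1 / Real.sqrt π))
  refine htot.congr_deriv ?_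
  have := claim_zero v
  nlinarith [this]

lemma tendsto_term1 (l : Filter ℝ) (h : Tendsto phi l (nhds 0)) :
    Tendsto (fun v => -((2 * Phi v - 1) * phi v)) l (nhds 0) := by
  apply squeeze_zero_norm (fun v => ?_) h
  rw [norm_neg, Real.norm_eq_abs, abs_mul, abs_of_nonneg (phi_nonneg v)]
  have := abs_two_Phi_sub_one_le v
  nlinarith [phi_nonneg v, abs_nonneg (2 * Phi v - 1)]

lemma tendsto_sqrt2_atBot : Tendsto (fun v : ℝ => Real.sqrt 2 * v) atBot atBot := by
  have h2p : (0:ℝ) < Real.sqrt 2 := Real.sqrt_pos.mpr (by norm_num)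
  exact tendsto_id.const_mul_atBot h2p

lemma tendsto_sqrt2_atTop : Tendsto (fun v : ℝ => Real.sqrt 2 * v) atTop atTop := by
  have h2p : (0:ℝ) < Real.sqrt 2 := Real.sqrt_pos.mpr (by norm_num)
  exact tendsto_id.const_mul_atTop h2p

lemma tendsto_Hfun_atBot : Tendsto Hfun atBot (nhds 0) := by
  have h1 := tendsto_term1 atBot tendsto_phi_atBot
  have h2 := (tendsto_Phi_atBot.comp tendsto_sqrt2_atBot).const_mul (1 / Real.sqrt π)
  have := h1.add h2
  have hH : Hfun = fun v => -((2 * Phi v - 1) * phi v) + (1 / Real.sqrt π) * Phi (Real.sqrt 2 * v) := rfl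
  rw [hH]
  simpa [Function.comp] using this

lemma tendsto_Hfun_atTop : Tendsto Hfun atTop (nhds (1 / Real.sqrt π)) := by
  have h1 := tendsto_term1 atTop tendsto_phi_atTop
  have h2 := (tendsto_Phi_atTop.comp tendsto_sqrt2_atTop).const_mul (1 / Real.sqrt π)
  have := h1.add h2
  have hH : Hfun = fun v => -((2 * Phi v - 1) * phi v) + (1 / Real.sqrt π) * Phi (Real.sqrt 2 * v) := rfl
  rw [hH]
  simpa [Function.comp] using this

lemma integral_K : ∫ v, phi v * (v * (2 * Phi v - 1)) = 1 / Real.sqrt π := by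
  have := integral_of_hasDerivAt_of_tendsto (f := Hfun)
    (f' := fun v => phi v * (v * (2 * Phi v - 1)))
    (fun v => hasDerivAt_Hfun v) integrable_K tendsto_Hfun_atBot tendsto_Hfun_atTop
  simpa using this

lemma integrable_abs_id_gauss : Integrable (fun u : ℝ => |u|) (gaussianReal 0 1) := by
  rw [integrable_gauss_iff]
  exact integrable_abs_mul_phi.congr (ae_of_all _ fun u => (mul_comm _ _))

lemma integrable_F :
    Integrable (fun p : ℝ × ℝ => |p.1 - p.2|) ((gaussianReal 0 1).prod (gaussianReal 0 1)) := by
  set G := gaussianReal 0 1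
  have h1 : Integrable (fun p : ℝ × ℝ => |p.1|) (G.prod G) := by
    have hmap : Measure.map Prod.fst (G.prod G) = G := by
      rw [Measure.map_fst_prod]
      simp
    have := (integrable_map_measure (f := Prod.fst) (g := fun u : ℝ => |u|)
      (by rw [hmap]; exact integrable_abs_id_gauss.aestronglyMeasurable)
      measurable_fst.aemeasurable).1
    rw [hmap] at this
    exact this integrable_abs_id_gauss
  have h2 : Integrable (fun p : ℝ × ℝ => |p.2|) (G.prod G) := by
    have hmap : Measure.map Prod.snd (G.prod G) = G := by
      rw [Measure.map_snd_prod]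
      simp
    have := (integrable_map_measure (f := Prod.snd) (g := fun u : ℝ => |u|)
      (by rw [hmap]; exact integrable_abs_id_gauss.aestronglyMeasurable)
      measurable_snd.aemeasurable).1
    rw [hmap] at this
    exact this integrable_abs_id_gauss
  refine Integrable.mono' (h1.add h2)
    ((continuous_fst.sub continuous_snd).abs.aestronglyMeasurable)
    (ae_of_all _ fun p => ?_)
  rw [Real.norm_eq_abs, abs_abs]
  exact abs_sub p.1 p.2

lemma integrable_phi_sq : Integrable (fun u => phi u * phi u) := by
  simp_rw [phi_sq]
  refine ((integrable_exp_neg_mul_sq (by norm_num : (0:ℝ) < 1)).const_mul (1 / (2 * π))).congr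
    (ae_of_all _ fun u => ?_)
  norm_num

lemma gini_gauss : gini (gaussianReal 0 1) = 2 / Real.sqrt π := by
  unfold gini
  rw [integral_prod _ integrable_F]
  have hinner : ∀ u : ℝ, ∫ v, |u - v| ∂(gaussianReal 0 1) = 2 * phi u + u * (2 * Phi u - 1) := by
    intro u
    rw [← integral_abs_gauss u]
    congr 1
    ext v
    rw [abs_sub_comm]
  calc ∫ u, (∫ v, |u - v| ∂(gaussianReal 0 1)) ∂(gaussianReal 0 1)
      = ∫ u, (2 * phi u + u * (2 * Phi u - 1)) ∂(gaussianReal 0 1) := by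
        congr 1; ext u; rw [hinner u]
    _ = ∫ u, phi u * (2 * phi u + u * (2 * Phi u - 1)) := integral_gauss _
    _ = (∫ u, 2 * (phi u * phi u)) + ∫ u, phi u * (u * (2 * Phi u - 1)) := by
        rw [← integral_add ((integrable_phi_sq.const_mul 2)) integrable_K]
        congr 1; ext u; ring
    _ = 2 / Real.sqrt π := by
        rw [integral_const_mul, integral_phi_sq, integral_K]
        have hs : (0:ℝ) < Real.sqrt π := Real.sqrt_pos.mpr pi_pos
        field_simp
        norm_num

lemma prod_smul_left (c : ENNReal) (μ ν : Measure ℝ) [SFinite ν] :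
    (c • μ).prod ν = c • (μ.prod ν) := by
  ext s hs
  rw [Measure.prod_apply hs, Measure.smul_apply, Measure.prod_apply hs,
    lintegral_smul_measure]

lemma prod_smul_right (c : ENNReal) (μ ν : Measure ℝ) [SFinite ν] :
    μ.prod (c • ν) = c • (μ.prod ν) := by
  ext s hs
  rw [Measure.prod_apply hs, Measure.smul_apply, Measure.prod_apply hs, smul_eq_mul]
  simp_rw [Measure.smul_apply, smul_eq_mul]
  rw [lintegral_const_mul _ (measurable_measure_prodMk_left hs)]

lemma integrable_f_map1 (x : ℝ) :
    Integrable (fun p : ℝ × ℝ => |p.1 - p.2|)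
      ((gaussianReal 0 1).map (fun u => (u, x))) := by
  refine (integrable_map_measure
    ((continuous_fst.sub continuous_snd).abs.aestronglyMeasurable)
    (measurable_id.prodMk measurable_const).aemeasurable).2 ?_
  exact integrable_abs_gauss x

lemma integrable_f_map2 (x : ℝ) :
    Integrable (fun p : ℝ × ℝ => |p.1 - p.2|)
      ((gaussianReal 0 1).map (Prod.mk x)) := by
  refine (integrable_map_measure
    ((continuous_fst.sub continuous_snd).abs.aestronglyMeasurable)
    (measurable_const.prodMk measurable_id).aemeasurable).2 ?_
  exact (integrable_abs_gauss x).congr (ae_of_all _ fun u => by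
    show |u - x| = |x - u|
    rw [abs_sub_comm])

lemma integral_f_map1 (x : ℝ) :
    ∫ p, |p.1 - p.2| ∂((gaussianReal 0 1).map (fun u => (u, x))) =
      2 * phi x + x * (2 * Phi x - 1) := by
  rw [integral_map (φ := fun u : ℝ => (u, x))
    (Measurable.aemeasurable (by fun_prop)) (f := fun p : ℝ × ℝ => |p.1 - p.2|)
    ((continuous_fst.sub continuous_snd).abs.aestronglyMeasurable)]
  exact integral_abs_gauss x

lemma integral_f_map2 (x : ℝ) :
    ∫ p, |p.1 - p.2| ∂((gaussianReal 0 1).map (Prod.mk x)) =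
      2 * phi x + x * (2 * Phi x - 1) := by
  rw [integral_map (φ := Prod.mk x)
    (Measurable.aemeasurable (by fun_prop)) (f := fun p : ℝ × ℝ => |p.1 - p.2|)
    ((continuous_fst.sub continuous_snd).abs.aestronglyMeasurable)]
  rw [← integral_abs_gauss x]
  congr 1
  ext u
  show |x - u| = |u - x|
  rw [abs_sub_comm]

lemma gini_contam {ε : ℝ} (hε0 : 0 ≤ ε) (hε1 : ε ≤ 1) (x : ℝ) :
    gini (contam ε x) = (1 - ε) ^ 2 * (2 / Real.sqrt π) +
      2 * (ε * (1 - ε)) * (2 * phi x + x * (2 * Phi x - 1)) := by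
  set G := gaussianReal 0 1 with hG
  set δ := Measure.dirac x with hδ
  set a := ENNReal.ofReal (1 - ε) with ha
  set b := ENNReal.ofReal ε with hb
  have hane : a ≠ ⊤ := ENNReal.ofReal_ne_top
  have hbne : b ≠ ⊤ := ENNReal.ofReal_ne_top
  have hdecomp : (contam ε x).prod (contam ε x) =
      (a * a) • (G.prod G) + ((a * b) • (G.map (fun u => (u, x))) +
        ((a * b) • (G.map (Prod.mk x)) + (b * b) • (Measure.dirac (x, x)))) := by
    show (a • G + b • δ).prod (a • G + b • δ) = _
    rw [Measure.add_prod, Measure.prod_add, Measure.prod_add]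
    simp only [prod_smul_left, prod_smul_right, smul_smul]
    simp only [mul_comm b a]
    rw [Measure.prod_dirac, Measure.dirac_prod, Measure.dirac_prod_dirac]
    abel
  have hf4 : Integrable (fun p : ℝ × ℝ => |p.1 - p.2|) (Measure.dirac (x, x)) := by
    have heq := MeasureTheory.ae_eq_dirac (a := (x, x)) (fun p : ℝ × ℝ => |p.1 - p.2|)
    exact (integrable_const _).congr heq.symm
  have key : gini (contam ε x) =
      ((a*a).toReal) • (∫ p, |p.1 - p.2| ∂(G.prod G)) +
      (((a*b).toReal) • (∫ p, |p.1 - p.2| ∂(G.map (fun u => (u, x)))) +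
      (((a*b).toReal) • (∫ p, |p.1 - p.2| ∂(G.map (Prod.mk x))) +
       ((b*b).toReal) • (∫ p, |p.1 - p.2| ∂(Measure.dirac (x, x))))) := by
    unfold gini
    rw [hdecomp]
    rw [integral_add_measure (integrable_F.smul_measure (ENNReal.mul_ne_top hane hane))
      (((integrable_f_map1 x).smul_measure (ENNReal.mul_ne_top hane hbne)).add_measure
        (((integrable_f_map2 x).smul_measure (ENNReal.mul_ne_top hane hbne)).add_measure
          (hf4.smul_measure (ENNReal.mul_ne_top hbne hbne)))),
      integral_add_measure ((integrable_f_map1 x).smul_measure (ENNReal.mul_ne_top hane hbne))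
        (((integrable_f_map2 x).smul_measure (ENNReal.mul_ne_top hane hbne)).add_measure
          (hf4.smul_measure (ENNReal.mul_ne_top hbne hbne))),
      integral_add_measure ((integrable_f_map2 x).smul_measure (ENNReal.mul_ne_top hane hbne))
        (hf4.smul_measure (ENNReal.mul_ne_top hbne hbne)),
      integral_smul_measure, integral_smul_measure, integral_smul_measure, integral_smul_measure]
  rw [key]
  have hta : (a).toReal = 1 - ε := by rw [ha, ENNReal.toReal_ofReal (by linarith)]
  have htb : (b).toReal = ε := by rw [hb, ENNReal.toReal_ofReal hε0]
  have hdirac0 : ∫ p, |p.1 - p.2| ∂(Measure.dirac (x, x)) = 0 := by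
    rw [integral_dirac]
    simp
  simp only [ENNReal.toReal_mul, hta, htb]
  rw [hdirac0, integral_f_map1, integral_f_map2]
  have hgg : ∫ p, |p.1 - p.2| ∂(G.prod G) = 2 / Real.sqrt π := gini_gauss
  rw [hgg]
  simp only [smul_eq_mul]
  ring

theorem stmt19 (x : ℝ) :
    Filter.Tendsto (fun ε : ℝ => (gini (contam ε x) - gini (gaussianReal 0 1)) / ε)
      (nhdsWithin 0 (Set.Ioi 0))
      (nhds (4 * phi x + 2 * x * (2 * Phi x - 1) - 4 / Real.sqrt Real.pi)) := by
  have heq : ∀ᶠ ε in nhdsWithin (0:ℝ) (Ioi 0),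
      (2 / Real.sqrt π) * (ε - 2) + 2 * (1 - ε) * (2 * phi x + x * (2 * Phi x - 1)) =
      (gini (contam ε x) - gini (gaussianReal 0 1)) / ε := by
    have h1 : Iio (1:ℝ) ∈ nhdsWithin (0:ℝ) (Ioi 0) :=
      mem_nhdsWithin_of_mem_nhds (Iio_mem_nhds one_pos)
    have h2 : Ioi (0:ℝ) ∈ nhdsWithin (0:ℝ) (Ioi 0) := self_mem_nhdsWithin
    filter_upwards [h1, h2] with ε hε1 hε0
    rw [gini_contam (le_of_lt hε0) (le_of_lt hε1) x, gini_gauss, eq_div_iff (ne_of_gt hε0)]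
    ring
  have hlim : Tendsto (fun ε : ℝ =>
      (2 / Real.sqrt π) * (ε - 2) + 2 * (1 - ε) * (2 * phi x + x * (2 * Phi x - 1)))
      (nhdsWithin (0:ℝ) (Ioi 0))
      (nhds ((2 / Real.sqrt π) * ((0:ℝ) - 2) + 2 * (1 - (0:ℝ)) * (2 * phi x + x * (2 * Phi x - 1)))) := by
    apply Tendsto.mono_left _ nhdsWithin_le_nhds
    exact Continuous.tendsto (by fun_prop) 0
  have hval : (2 / Real.sqrt π) * ((0:ℝ) - 2) + 2 * (1 - (0:ℝ)) * (2 * phi x + x * (2 * Phi x - 1)) =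
      4 * phi x + 2 * x * (2 * Phi x - 1) - 4 / Real.sqrt Real.pi := by
    ring
  rw [hval] at hlim
  exact hlim.congr' heq
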